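/- Let (X, d) be a metric space satisfying the Ptolemy inequality, i.e. d(x,y)·d(z,w) ≤ d(x,z)·d(y,w) + d(x,w)·d(y,z) for all x, y, z, w ∈ X, and let D ⊊ X be an open set with nonempty boundary ∂D. Then the function ĉ_D(x,y) = sup_{p ∈ ∂D} d(x,y) / max(d(x,p), d(y,p)) is a metric on D: it is nonnegative, symmetric, vanishes exactly when x = y, and satisfies the triangle inequality ĉ_D(x,y) ≤ ĉ_D(x,z) + ĉ_D(z,y) for all x, y, z ∈ D. -/

import Mathlib

open Set Metric

/-- The candidate metric `ĉ_D(x,y) = sup_{p ∈ ∂D} d(x,y) / max(d(x,p), d(y,p))`. -/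
noncomputable def ctildeDist {X : Type*} [MetricSpace X] (D : Set X) (x y : X) : ℝ :=
  ⨆ p : frontier D, dist x y / max (dist x (p : X)) (dist y (p : X))

/-- Key numerical inequality. -/
lemma ctilde_key (a b c dxy dxz dzy : ℝ) (ha : 0 < a) (hb : 0 < b) (hc : 0 < c)
    (hxz : 0 ≤ dxz) (hzy : 0 ≤ dzy)
    (htri : dxy ≤ dxz + dzy) (hpt : dxy * c ≤ dxz * b + a * dzy) :
    dxy / max a b ≤ dxz / max a c + dzy / max c b := by
  have hM : 0 < max a b := lt_of_lt_of_le ha (le_max_left a b)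
  rcases le_or_gt (max a b) c with h | h
  · have hac : max a c = c := max_eq_right ((le_max_left a b).trans h)
    have hcb : max c b = c := max_eq_left ((le_max_right a b).trans h)
    rw [hac, hcb, ← add_div, div_le_div_iff₀ hM hc]
    calc dxy * c ≤ dxz * b + a * dzy := hpt
      _ ≤ dxz * max a b + max a b * dzy := by
          gcongr
          · exact le_max_right a b
          · exact le_max_left a b
      _ = (dxz + dzy) * max a b := by ring
  · have h1 : dxz / max a b ≤ dxz / max a c := by
      apply div_le_div_of_nonneg_left hxz (lt_of_lt_of_le ha (le_max_left a c))
      exact max_le (le_max_left a b) h.le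
    have h2 : dzy / max a b ≤ dzy / max c b := by
      apply div_le_div_of_nonneg_left hzy (lt_of_lt_of_le hb (le_max_right c b))
      exact max_le h.le (le_max_right a b)
    calc dxy / max a b ≤ (dxz + dzy) / max a b := by gcongr
      _ = dxz / max a b + dzy / max a b := add_div _ _ _
      _ ≤ dxz / max a c + dzy / max c b := add_le_add h1 h2

lemma ctilde_dist_pos {X : Type*} [MetricSpace X] {D : Set X} (hD : IsOpen D) {x : X}
    (hx : x ∈ D) (p : frontier D) : 0 < dist x (p : X) := by
  have hxf : x ∉ frontier D := by
    rw [hD.frontier_eq]; exact fun h => h.2 hx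
  exact dist_pos.mpr (fun h => hxf (h ▸ p.2))

lemma ctilde_bdd {X : Type*} [MetricSpace X] {D : Set X} (hD : IsOpen D)
    (hfr : (frontier D).Nonempty) {x : X} (hx : x ∈ D) (y : X) :
    BddAbove (Set.range fun p : frontier D =>
      dist x y / max (dist x (p : X)) (dist y (p : X))) := by
  have hxf : x ∉ frontier D := by
    rw [hD.frontier_eq]; exact fun h => h.2 hx
  have hpos : 0 < infDist x (frontier D) :=
    (isClosed_frontier.notMem_iff_infDist_pos hfr).1 hxf
  refine ⟨dist x y / infDist x (frontier D), ?_⟩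
  rintro _ ⟨p, rfl⟩
  apply div_le_div_of_nonneg_left dist_nonneg hpos
  exact le_trans (infDist_le_dist_of_mem p.2) (le_max_left _ _)

theorem ctilde_is_metric {X : Type*} [MetricSpace X]
    (hPt : ∀ x y z w : X, dist x y * dist z w ≤ dist x z * dist y w + dist x w * dist y z)
    (D : Set X) (hD : IsOpen D) (hDproper : D ≠ Set.univ) (hfr : (frontier D).Nonempty) :
    (∀ x ∈ D, ∀ y ∈ D, 0 ≤ ctildeDist D x y) ∧
    (∀ x ∈ D, ∀ y ∈ D, ctildeDist D x y = ctildeDist D y x) ∧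
    (∀ x ∈ D, ∀ y ∈ D, (ctildeDist D x y = 0 ↔ x = y)) ∧
    (∀ x ∈ D, ∀ y ∈ D, ∀ z ∈ D,
      ctildeDist D x y ≤ ctildeDist D x z + ctildeDist D z y) := by
  haveI : Nonempty (frontier D) := hfr.to_subtype
  refine ⟨?_, ?_, ?_, ?_⟩
  · intro x _ y _
    exact Real.iSup_nonneg fun p => div_nonneg dist_nonneg
      (le_trans dist_nonneg (le_max_left _ _))
  · intro x _ y _
    unfold ctildeDist
    exact iSup_congr fun p => by rw [dist_comm x y, max_comm]
  · intro x hx y hy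
    constructor
    · intro h
      by_contra hne
      obtain ⟨p⟩ := ‹Nonempty (frontier D)›
      have hterm : 0 < dist x y / max (dist x (p : X)) (dist y (p : X)) :=
        div_pos (dist_pos.mpr hne)
          (lt_of_lt_of_le (ctilde_dist_pos hD hx p) (le_max_left _ _))
      have := le_ciSup (ctilde_bdd hD hfr hx y) p
      rw [ctildeDist] at h
      linarith
    · rintro rfl
      unfold ctildeDist
      simp [dist_self]
  · intro x hx y hy z hz
    unfold ctildeDist
    apply ciSup_le
    intro p
    calc dist x y / max (dist x (p : X)) (dist y (p : X))
        ≤ dist x z / max (dist x (p : X)) (dist z (p : X)) +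
          dist z y / max (dist z (p : X)) (dist y (p : X)) := by
          apply ctilde_key _ _ _ _ _ _ (ctilde_dist_pos hD hx p)
            (ctilde_dist_pos hD hy p) (ctilde_dist_pos hD hz p)
            dist_nonneg dist_nonneg (dist_triangle x z y)
          have := hPt x y z (p : X)
          calc dist x y * dist z (p : X) ≤
              dist x z * dist y (p : X) + dist x (p : X) * dist y z := this
            _ = dist x z * dist y (p : X) + dist x (p : X) * dist z y := by
                rw [dist_comm y z]
      _ ≤ (⨆ q : frontier D, dist x z / max (dist x (q : X)) (dist z (q : X))) +
          ⨆ q : frontier D, dist z y / max (dist z (q : X)) (dist y (q : X)) :=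
          add_le_add (le_ciSup (ctilde_bdd hD hfr hx z) p)
            (le_ciSup (ctilde_bdd hD hfr hz y) p)
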